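/- arXiv:2009.03772 — 2 statements merged into one kernel-verified Lean document; each statement's English description precedes it below -/
import Mathlib

section
/- Let Λ = O[[X]] and let B ⊂ Λ be the maximal ideal of Λ. Then B/ϖB ≅ Ω ⊕ κ as Ω-modules, where Ω = Λ/(ϖ) and κ is the residue field of O. -/
open PowerSeries

noncomputable section
variable {O : Type*} [CommRing O]

def dX (f : PowerSeries O) : PowerSeries O := PowerSeries.mk fun n => coeff (n+1) f

lemma dX_spec (f : PowerSeries O) : f = C (constantCoeff f) + X * dX f := by
  ext n
  cases n with
  | zero => simp [dX]
  | succ n => simp [dX, coeff_succ_X_mul, coeff_C]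

lemma dX_unique {f g : PowerSeries O} {a : O} (h : f = C a + X * g) :
    constantCoeff f = a ∧ dX f = g := by
  constructor
  · rw [h]; simp
  · ext n
    have := congrArg (coeff (n+1)) h
    simpa [dX, coeff_succ_X_mul, coeff_C] using this

section Main
variable [IsDomain O] [IsDiscreteValuationRing O] (ϖ : O) (hϖ : Irreducible ϖ)

open scoped Classical in
def uC (f : PowerSeries O) : O :=
  if h : ϖ ∣ constantCoeff f then h.choose else 0

include hϖ in
lemma mem_B_iff (f : PowerSeries O) :
    f ∈ IsLocalRing.maximalIdeal (PowerSeries O) ↔ ϖ ∣ constantCoeff f := by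
  rw [IsLocalRing.mem_maximalIdeal, mem_nonunits_iff, isUnit_iff_constantCoeff,
    ← mem_nonunits_iff, ← IsLocalRing.mem_maximalIdeal, hϖ.maximalIdeal_eq,
    Ideal.mem_span_singleton]

omit [IsDomain O] [IsDiscreteValuationRing O] in
lemma uC_spec {f : PowerSeries O} (hf : ϖ ∣ constantCoeff f) :
    constantCoeff f = ϖ * uC ϖ f := by
  rw [uC, dif_pos hf]; exact hf.choose_spec

include hϖ in
omit [IsDiscreteValuationRing O] in
lemma uC_unique {f : PowerSeries O} {a : O} (h : constantCoeff f = ϖ * a) :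
    uC ϖ f = a := by
  have hd : ϖ ∣ constantCoeff f := ⟨a, h⟩
  exact mul_left_cancel₀ hϖ.ne_zero ((uC_spec ϖ hd).symm.trans h)

local notation "Λ" => PowerSeries O
local notation "B" => IsLocalRing.maximalIdeal (PowerSeries O)
local notation "J" => Ideal.span {C ϖ}

include hϖ in
lemma decomp {f : Λ} (hf : f ∈ B) : f = C (ϖ * uC ϖ f) + X * dX f := by
  conv_lhs => rw [dX_spec f]
  rw [uC_spec ϖ ((mem_B_iff ϖ hϖ f).1 hf)]

/-- the key linear map -/
def Phi (hϖ : Irreducible ϖ) :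
    B →ₗ[Λ] (Λ ⧸ (J : Ideal Λ)) × IsLocalRing.ResidueField Λ where
  toFun f := (Ideal.Quotient.mk _ (dX (f : Λ)),
              IsLocalRing.residue _ (C (uC ϖ (f : Λ))))
  map_add' x y := by
    have hx := (mem_B_iff ϖ hϖ _).1 x.2
    have hy := (mem_B_iff ϖ hϖ _).1 y.2
    have hu : uC ϖ ((x : Λ) + (y : Λ)) = uC ϖ (x : Λ) + uC ϖ (y : Λ) := by
      apply uC_unique ϖ hϖ
      rw [map_add, uC_spec ϖ hx, uC_spec ϖ hy]; ring
    have hd : dX ((x : Λ) + (y : Λ)) = dX (x : Λ) + dX (y : Λ) := by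
      ext n; simp [dX]
    simp only [Submodule.coe_add, hd, hu, map_add, Prod.mk_add_mk]
  map_smul' r x := by
    have hx := (mem_B_iff ϖ hϖ _).1 x.2
    obtain ⟨l0, dl, hr⟩ : ∃ a g, r = C a + X * g := ⟨_, _, dX_spec r⟩
    set f := (x : Λ) with hfdef
    set u := uC ϖ f with hudef
    set df := dX f with hdfdef
    have hf : f = C (ϖ * u) + X * df := decomp ϖ hϖ x.2
    have key : r * f = C (l0 * (ϖ * u)) +
        X * (C l0 * df + dl * C (ϖ * u) + X * (dl * df)) := by
      conv_lhs => rw [hr, hf]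
      simp only [map_mul]; ring
    have h2 := dX_unique key
    have hcoe : ((r • x : B) : Λ) = r * f := by
      rw [hfdef]; rfl
    have c1 : Ideal.Quotient.mk (J : Ideal Λ) (dX (r * f)) =
        Ideal.Quotient.mk _ (r * df) := by
      rw [Ideal.Quotient.eq, Ideal.mem_span_singleton]
      refine ⟨dl * C u, ?_⟩
      rw [h2.2]
      conv_lhs => rw [hr]
      rw [map_mul]; ring
    have hu2 : uC ϖ (r * f) = l0 * u := by
      apply uC_unique ϖ hϖ
      rw [h2.1]; ring
    have hres : IsLocalRing.residue Λ (C l0) = IsLocalRing.residue Λ r := by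
      have : C l0 - r ∈ B := by
        rw [mem_B_iff ϖ hϖ, map_sub, hr]
        simp
      exact Ideal.Quotient.eq.2 this
    simp only [hcoe, c1, hu2, RingHom.id_apply, Prod.smul_mk]
    rw [Prod.mk.injEq]
    refine ⟨rfl, ?_⟩
    rw [show C (l0 * u) = C l0 * C u from map_mul _ _ _, map_mul, hres]
    rfl

include hϖ in
lemma Phi_surjective : Function.Surjective (Phi ϖ hϖ) := by
  rintro ⟨p, q⟩
  obtain ⟨p, rfl⟩ := Ideal.Quotient.mk_surjective p
  obtain ⟨q, rfl⟩ := Ideal.Quotient.mk_surjective (I := B) q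
  refine ⟨⟨X * p + C (ϖ * constantCoeff q), ?_⟩, ?_⟩
  · rw [mem_B_iff ϖ hϖ]
    simp
  · have hdec : X * p + C (ϖ * constantCoeff q)
        = C (ϖ * constantCoeff q) + X * p := by ring
    have h2 := dX_unique hdec
    have hu : uC ϖ (X * p + C (ϖ * constantCoeff q)) = constantCoeff q :=
      uC_unique ϖ hϖ h2.1
    have hres : IsLocalRing.residue Λ (C (constantCoeff q)) =
        IsLocalRing.residue Λ q := by
      refine Ideal.Quotient.eq.2 ?_
      rw [mem_B_iff ϖ hϖ, map_sub]
      simp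
    simp only [Phi, LinearMap.coe_mk, AddHom.coe_mk, h2.2, hu, hres]
    rfl

include hϖ in
lemma Phi_ker : LinearMap.ker (Phi ϖ hϖ) =
    ((J : Ideal Λ) • ⊤ : Submodule Λ B) := by
  apply le_antisymm
  · intro x hx
    rw [LinearMap.mem_ker] at hx
    have hx1 : dX (x : Λ) ∈ (J : Ideal Λ) := by
      have := congrArg Prod.fst hx
      exact Ideal.Quotient.eq_zero_iff_mem.1 this
    have hx2 : C (uC ϖ (x : Λ)) ∈ B := by
      have := congrArg Prod.snd hx
      exact Ideal.Quotient.eq_zero_iff_mem.1 this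
    rw [Ideal.mem_span_singleton] at hx1
    obtain ⟨g, hg⟩ := hx1
    rw [mem_B_iff ϖ hϖ] at hx2
    simp only [constantCoeff_C] at hx2
    obtain ⟨v, hv⟩ := hx2
    have hfeq : (x : Λ) = C ϖ * (C (ϖ * v) + X * g) := by
      conv_lhs => rw [decomp ϖ hϖ x.2, hv, hg]
      simp only [map_mul]; ring
    have hmem : C (ϖ * v) + X * g ∈ B := by
      rw [mem_B_iff ϖ hϖ]
      simp
    have : x = (C ϖ) • (⟨C (ϖ * v) + X * g, hmem⟩ : B) := by
      ext
      rw [hfeq]; rfl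
    rw [this]
    exact Submodule.smul_mem_smul (Ideal.subset_span rfl) trivial
  · rw [Submodule.smul_le]
    rintro r hr m -
    rw [LinearMap.mem_ker, map_smul]
    have h1 : Ideal.Quotient.mk (J : Ideal Λ) r = 0 :=
      Ideal.Quotient.eq_zero_iff_mem.2 hr
    have h2 : IsLocalRing.residue Λ r = 0 := by
      refine Ideal.Quotient.eq_zero_iff_mem.2 ?_
      rw [mem_B_iff ϖ hϖ]
      rw [Ideal.mem_span_singleton] at hr
      obtain ⟨g, rfl⟩ := hr
      exact ⟨constantCoeff g, by simp⟩
    have : ∀ z : (Λ ⧸ (J : Ideal Λ)) × IsLocalRing.ResidueField Λ,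
        r • z = (Ideal.Quotient.mk _ r * z.1, IsLocalRing.residue Λ r * z.2) := by
      rintro ⟨a, b⟩
      obtain ⟨a, rfl⟩ := Ideal.Quotient.mk_surjective a
      obtain ⟨b, rfl⟩ := Ideal.Quotient.mk_surjective (I := B) b
      rfl
    rw [this, h1, h2]
    simp

end Main
end

/-- Let Λ = O[[X]] and let B ⊂ Λ be the maximal ideal of Λ.  Then
B/ϖB ≅ Ω ⊕ κ as Ω = Λ/(ϖ)-modules, where κ is the residue field of O.  (The
isomorphism is stated Λ-linearly; all modules are Λ-modules killed by ϖ, so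
this is equivalent to Ω-linearity.) -/
theorem maximalIdeal_mod_uniformizer
    (O : Type*) [CommRing O] [IsDomain O] [IsDiscreteValuationRing O]
    [IsAdicComplete (IsLocalRing.maximalIdeal O) O]
    (ϖ : O) (hϖ : Irreducible ϖ)
    (I : Ideal (PowerSeries O)) (hI : I = Ideal.span {C ϖ}) :
    Nonempty
      ((IsLocalRing.maximalIdeal (PowerSeries O) ⧸
          (I • ⊤ : Submodule (PowerSeries O)
            (IsLocalRing.maximalIdeal (PowerSeries O))))
        ≃ₗ[PowerSeries O]
       ((PowerSeries O ⧸ I) × IsLocalRing.ResidueField (PowerSeries O))) := by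
  subst hI
  refine ⟨?_⟩
  rw [← Phi_ker ϖ hϖ]
  exact (Phi ϖ hϖ).quotKerEquivOfSurjective (Phi_surjective ϖ hϖ)
end

section
/- Let Λ = O[[X]], B the maximal ideal of Λ, and A = Λ ⊕ O. Then A/ϖA ≅ B/ϖB as Ω = Λ/(ϖ)-modules, both have Λ-rank 1, μ(A) = μ(B) = 0, neither has a nonzero finite Λ-submodule, yet λ(A) = 1 ≠ 0 = λ(B). -/
open PowerSeries

set_option maxHeartbeats 2000000


section Aux

variable {R : Type*} [CommRing R] {M : Type*} [AddCommGroup M] [Module R M]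
  {N : Type*} [AddCommGroup N] [Module R N]

noncomputable def exQuotProdEquiv (p : Submodule R M) (q : Submodule R N) :
    ((M × N) ⧸ p.prod q) ≃ₗ[R] (M ⧸ p) × (N ⧸ q) :=
  (Submodule.quotEquivOfEq _ _
      (by rw [LinearMap.ker_prodMap, Submodule.ker_mkQ, Submodule.ker_mkQ])).trans
    ((p.mkQ.prodMap q.mkQ).quotKerEquivOfSurjective (fun y => by
      obtain ⟨a, ha⟩ := Submodule.mkQ_surjective p y.1
      obtain ⟨b, hb⟩ := Submodule.mkQ_surjective q y.2
      exact ⟨(a, b), by simp [LinearMap.prodMap_apply, ha, hb]⟩))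

noncomputable def exQuotSmulTopEquivOfSurjective (I : Ideal R) (f : M →ₗ[R] N)
    (hf : Function.Surjective f) :
    (M ⧸ (LinearMap.ker f ⊔ (I • ⊤ : Submodule R M))) ≃ₗ[R]
      (N ⧸ (I • ⊤ : Submodule R N)) := by
  have hmap : (I • ⊤ : Submodule R M).map f = (I • ⊤ : Submodule R N) := by
    rw [Submodule.map_smul'', Submodule.map_top, LinearMap.range_eq_top.mpr hf]
  have hker : LinearMap.ker ((I • ⊤ : Submodule R N).mkQ ∘ₗ f)
      = LinearMap.ker f ⊔ (I • ⊤ : Submodule R M) := by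
    rw [LinearMap.ker_comp, Submodule.ker_mkQ]
    apply le_antisymm
    · intro x hx
      rw [Submodule.mem_comap, ← hmap] at hx
      obtain ⟨y, hy, hxy⟩ := hx
      refine Submodule.mem_sup.mpr ⟨x - y, ?_, y, hy, sub_add_cancel x y⟩
      rw [LinearMap.mem_ker, map_sub, hxy, sub_self]
    · refine sup_le (fun x hx => ?_) (fun x hx => ?_)
      · rw [Submodule.mem_comap, LinearMap.mem_ker.mp hx]
        exact Submodule.zero_mem _
      · exact Submodule.mem_comap.mpr (hmap ▸ Submodule.mem_map_of_mem hx)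
  exact (Submodule.quotEquivOfEq _ _ hker.symm).trans
    (((I • ⊤ : Submodule R N).mkQ ∘ₗ f).quotKerEquivOfSurjective
      ((Submodule.mkQ_surjective _).comp hf))

noncomputable def exQuotSmulTopEquiv (I : Ideal R) (e : M ≃ₗ[R] N) :
    (M ⧸ (I • ⊤ : Submodule R M)) ≃ₗ[R] (N ⧸ (I • ⊤ : Submodule R N)) :=
  (Submodule.quotEquivOfEq (I • ⊤) (LinearMap.ker e.toLinearMap ⊔ (I • ⊤ : Submodule R M))
      (by rw [LinearMap.ker_eq_bot.mpr e.injective, bot_sup_eq])).trans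
    (exQuotSmulTopEquivOfSurjective I e.toLinearMap e.surjective)

theorem exMapTorsion (e : M ≃ₗ[R] N) :
    (Submodule.torsion R M).map (e : M →ₗ[R] N) = Submodule.torsion R N := by
  ext y
  simp only [Submodule.mem_map]
  constructor
  · rintro ⟨x, ⟨a, ha⟩, rfl⟩
    refine ⟨a, ?_⟩
    rw [Submonoid.smul_def] at ha ⊢
    rw [LinearEquiv.coe_coe, ← map_smul, ha, map_zero]
  · rintro ⟨a, ha⟩
    refine ⟨e.symm y, ⟨a, ?_⟩, by simp⟩
    rw [Submonoid.smul_def] at ha ⊢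
    rw [← map_smul e.symm, ha, map_zero]

noncomputable def exTorsionEquiv (e : M ≃ₗ[R] N) :
    (Submodule.torsion R M) ≃ₗ[R] (Submodule.torsion R N) :=
  (e.submoduleMap (Submodule.torsion R M)).trans
    (LinearEquiv.ofEq _ _ (exMapTorsion e))

noncomputable def exBotProdTopEquiv :
    (((⊥ : Submodule R M).prod (⊤ : Submodule R N)) : Submodule R (M × N)) ≃ₗ[R] N where
  toFun x := x.1.2
  map_add' _ _ := rfl
  map_smul' _ _ := rfl
  invFun b := ⟨(0, b), by simp [Submodule.mem_prod]⟩
  left_inv x := Subtype.ext (Prod.ext (show (0:M) = x.1.1 by simpa using (x.2.1 : x.1.1 ∈ (⊥ : Submodule R M)).symm ▸ rfl) rfl)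
  right_inv b := rfl

def exRestrictEquiv (R : Type*) {S M' N' : Type*} [CommSemiring R] [Semiring S] [Algebra R S]
    [AddCommMonoid M'] [AddCommMonoid N'] [Module S M'] [Module S N'] (e : M' ≃ₗ[S] N') :
    RestrictScalars R S M' ≃ₗ[R] RestrictScalars R S N' where
  toFun x := e x
  invFun y := e.symm y
  map_add' := e.map_add
  map_smul' c x := e.map_smul (algebraMap R S c) x
  left_inv := e.left_inv
  right_inv := e.right_inv

end Aux

section PS
variable {O : Type*} [CommRing O] [IsDomain O] [IsDiscreteValuationRing O]

theorem exMaxIdeal {ϖ : O} (hϖ : Irreducible ϖ) :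
    IsLocalRing.maximalIdeal (PowerSeries O) = Ideal.span {C ϖ, X} := by
  ext f
  rw [IsLocalRing.mem_maximalIdeal, mem_nonunits_iff, PowerSeries.isUnit_iff_constantCoeff,
    Ideal.mem_span_pair]
  constructor
  · intro h
    have h1 : constantCoeff f ∈ IsLocalRing.maximalIdeal O := h
    rw [hϖ.maximalIdeal_eq, Ideal.mem_span_singleton] at h1
    obtain ⟨u, hu⟩ := h1
    obtain ⟨g, hg⟩ : (X : PowerSeries O) ∣ f - C (constantCoeff f) :=
      X_dvd_iff.mpr (by simp)
    refine ⟨C u, g, ?_⟩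
    have : f = C (constantCoeff f) + X * g := by rw [← hg]; ring
    rw [this, hu]
    rw [map_mul]
    ring
  · rintro ⟨a, b, rfl⟩
    intro hunit
    rw [map_add, map_mul, map_mul, constantCoeff_C, constantCoeff_X, mul_zero, add_zero] at hunit
    exact hϖ.not_isUnit (isUnit_of_mul_isUnit_right hunit)

noncomputable def exPsi (ϖ : O) : (PowerSeries O × PowerSeries O) →ₗ[PowerSeries O] PowerSeries O :=
  C ϖ • LinearMap.fst (PowerSeries O) (PowerSeries O) (PowerSeries O) + (X : PowerSeries O) • LinearMap.snd (PowerSeries O) (PowerSeries O) (PowerSeries O)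

theorem exPsi_apply (ϖ : O) (p : PowerSeries O × PowerSeries O) :
    exPsi ϖ p = C ϖ * p.1 + X * p.2 := by
  simp [exPsi, smul_eq_mul]

theorem exPsi_range (ϖ : O) :
    LinearMap.range (exPsi ϖ) = (Ideal.span {C ϖ, X} : Ideal (PowerSeries O)) := by
  ext y
  rw [LinearMap.mem_range, Ideal.mem_span_pair]
  constructor
  · rintro ⟨⟨a, b⟩, rfl⟩; exact ⟨a, b, by rw [exPsi_apply]; ring⟩
  · rintro ⟨a, b, rfl⟩; exact ⟨(a, b), by rw [exPsi_apply]; ring⟩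

theorem exPsi_ker {ϖ : O} (hϖ : Irreducible ϖ) :
    LinearMap.ker (exPsi ϖ)
      = Submodule.span (PowerSeries O) {((X : PowerSeries O), -(C ϖ))} := by
  ext ⟨a, b⟩
  rw [LinearMap.mem_ker, exPsi_apply, Submodule.mem_span_singleton]
  constructor
  · intro h
    have hdvd : (X : PowerSeries O) ∣ C ϖ * a := ⟨-b, by linear_combination h⟩
    have hXa : (X : PowerSeries O) ∣ a := by
      rcases (X_prime.2.2 _ _ hdvd) with h1 | h2
      · exact absurd (by simpa using X_dvd_iff.mp h1) hϖ.ne_zero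
      · exact h2
    obtain ⟨c, rfl⟩ := hXa
    refine ⟨c, ?_⟩
    have hz : (X : PowerSeries O) * (C ϖ * c + b) = 0 := by linear_combination h
    have h2 : C ϖ * c + b = 0 := (mul_eq_zero.mp hz).resolve_left X_ne_zero
    rw [Prod.smul_mk, Prod.mk.injEq]
    constructor
    · rw [smul_eq_mul, mul_comm]
    · rw [smul_eq_mul]; linear_combination -h2
  · rintro ⟨c, hc⟩
    rw [Prod.smul_mk, Prod.mk.injEq] at hc
    obtain ⟨h1, h2⟩ := hc
    rw [← h1, ← h2]
    simp only [smul_eq_mul]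
    ring

end PS

section Sup
variable {O : Type*} [CommRing O]

theorem exKB (ϖ : O) :
    Submodule.span (PowerSeries O) {((X : PowerSeries O), -(C ϖ))}
        ⊔ ((Ideal.span {C ϖ}) • ⊤ :
          Submodule (PowerSeries O) (PowerSeries O × PowerSeries O))
      = Submodule.prod (Ideal.span {C ϖ, X} : Ideal (PowerSeries O)) (Ideal.span {C ϖ}) := by
  apply le_antisymm
  · refine sup_le (Submodule.span_le.mpr ?_) (Submodule.smul_le.mpr ?_)
    · intro y hy
      rw [Set.mem_singleton_iff] at hy
      subst hy
      refine Submodule.mem_prod.mpr ⟨?_, ?_⟩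
      · exact Ideal.subset_span (by simp)
      · exact Submodule.neg_mem _ (Ideal.subset_span rfl)
    · intro r hr n _
      refine Submodule.mem_prod.mpr ⟨?_, ?_⟩
      · show r • n.1 ∈ _
        rw [smul_eq_mul]
        exact Ideal.mul_mem_right _ _ (Ideal.span_mono (by simp) hr)
      · show r • n.2 ∈ _
        rw [smul_eq_mul]
        exact Ideal.mul_mem_right _ _ hr
  · rintro ⟨a, b⟩ hab
    obtain ⟨ha, hb⟩ := Submodule.mem_prod.mp hab
    have hsplit : ((a, b) : PowerSeries O × PowerSeries O) = (a, 0) + (0, b) := by simp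
    rw [hsplit]
    refine Submodule.add_mem _ ?_ ?_
    · obtain ⟨u, v, huv⟩ := Ideal.mem_span_pair.mp ha
      have h2 : ((a : PowerSeries O), (0 : PowerSeries O))
          = (u * C ϖ) • ((1 : PowerSeries O), (0 : PowerSeries O))
            + v • ((X : PowerSeries O), -(C ϖ))
            + (v * C ϖ) • ((0 : PowerSeries O), (1 : PowerSeries O)) := by
        simp only [Prod.smul_mk, Prod.mk_add_mk, Prod.mk.injEq, smul_eq_mul]
        constructor
        · linear_combination -huv
        · ring
      rw [h2]
      refine Submodule.add_mem _ (Submodule.add_mem _ ?_ ?_) ?_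
      · exact Submodule.mem_sup_right (Submodule.smul_mem_smul
          (Ideal.mul_mem_left _ u (Ideal.mem_span_singleton_self _)) Submodule.mem_top)
      · exact Submodule.mem_sup_left (Submodule.smul_mem _ v
          (Submodule.mem_span_singleton_self _))
      · exact Submodule.mem_sup_right (Submodule.smul_mem_smul
          (Ideal.mul_mem_left _ v (Ideal.mem_span_singleton_self _)) Submodule.mem_top)
    · have h3 : ((0 : PowerSeries O), b) = b • ((0 : PowerSeries O), (1 : PowerSeries O)) := by
        simp
      rw [h3]
      exact Submodule.mem_sup_right (Submodule.smul_mem_smul hb Submodule.mem_top)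

theorem exKA (ϖ : O) :
    ((⊥ : Submodule (PowerSeries O) (PowerSeries O)).prod
          (Ideal.span {(X : PowerSeries O)} : Ideal (PowerSeries O)))
        ⊔ ((Ideal.span {C ϖ}) • ⊤ :
          Submodule (PowerSeries O) (PowerSeries O × PowerSeries O))
      = Submodule.prod (Ideal.span {C ϖ} : Ideal (PowerSeries O)) (Ideal.span {C ϖ, X}) := by
  apply le_antisymm
  · refine sup_le (Submodule.prod_mono bot_le
      (Ideal.span_mono (by simp))) (Submodule.smul_le.mpr ?_)
    · intro r hr n _
      refine Submodule.mem_prod.mpr ⟨?_, ?_⟩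
      · show r • n.1 ∈ _
        rw [smul_eq_mul]
        exact Ideal.mul_mem_right _ _ hr
      · show r • n.2 ∈ _
        rw [smul_eq_mul]
        exact Ideal.mul_mem_right _ _ (Ideal.span_mono (by simp) hr)
  · rintro ⟨a, b⟩ hab
    obtain ⟨ha, hb⟩ := Submodule.mem_prod.mp hab
    have hsplit : ((a, b) : PowerSeries O × PowerSeries O) = (a, 0) + (0, b) := by simp
    rw [hsplit]
    refine Submodule.add_mem _ ?_ ?_
    · have h1 : ((a : PowerSeries O), (0 : PowerSeries O))
          = a • ((1 : PowerSeries O), (0 : PowerSeries O)) := by simp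
      rw [h1]
      exact Submodule.mem_sup_right (Submodule.smul_mem_smul ha Submodule.mem_top)
    · obtain ⟨u, v, huv⟩ := Ideal.mem_span_pair.mp hb
      have h2 : ((0 : PowerSeries O), b)
          = (u * C ϖ) • ((0 : PowerSeries O), (1 : PowerSeries O))
            + v • ((0 : PowerSeries O), (X : PowerSeries O)) := by
        simp only [Prod.smul_mk, Prod.mk_add_mk, Prod.mk.injEq, smul_eq_mul]
        constructor
        · ring
        · linear_combination -huv
      rw [h2]
      refine Submodule.add_mem _ ?_ ?_
      · exact Submodule.mem_sup_right (Submodule.smul_mem_smul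
          (Ideal.mul_mem_left _ u (Ideal.mem_span_singleton_self _)) Submodule.mem_top)
      · refine Submodule.mem_sup_left (Submodule.smul_mem _ v ?_)
        exact Submodule.mem_prod.mpr ⟨Submodule.mem_bot _ |>.mpr rfl,
          Ideal.mem_span_singleton_self _⟩

end Sup

section Tor
variable {O : Type*} [CommRing O] [IsDomain O]

noncomputable def exPMap : O →ₗ[O] RestrictScalars O (PowerSeries O)
    (PowerSeries O ⧸ (Ideal.span {(X : PowerSeries O)})) where
  toFun a := (RestrictScalars.addEquiv O (PowerSeries O) _).symm
    (Submodule.Quotient.mk (C a))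
  map_add' a b := by
    apply (RestrictScalars.addEquiv O (PowerSeries O) _).injective
    rw [AddEquiv.map_add]
    simp only [AddEquiv.apply_symm_apply]
    rw [map_add, Submodule.Quotient.mk_add]
  map_smul' a b := by
    apply (RestrictScalars.addEquiv O (PowerSeries O) _).injective
    rw [RingHom.id_apply, RestrictScalars.addEquiv_map_smul]
    simp only [AddEquiv.apply_symm_apply]
    rw [← Submodule.Quotient.mk_smul, PowerSeries.algebraMap_apply,
      Algebra.algebraMap_self_apply]
    exact congrArg _ (by rw [smul_eq_mul]; exact map_mul (C (R := O)) a b)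


noncomputable def exPEquiv :
    O ≃ₗ[O] RestrictScalars O (PowerSeries O)
      (PowerSeries O ⧸ (Ideal.span {(X : PowerSeries O)})) := by
  refine LinearEquiv.ofBijective exPMap ⟨?_, ?_⟩
  · intro a b hab
    have h1 : (Submodule.Quotient.mk (C a) :
        PowerSeries O ⧸ (Ideal.span {(X : PowerSeries O)}))
        = Submodule.Quotient.mk (C b) := hab
    rw [Submodule.Quotient.eq] at h1
    have h2 : (X : PowerSeries O) ∣ C a - C b := (Ideal.mem_span_singleton).mp h1
    have h3 := X_dvd_iff.mp h2
    rw [map_sub, constantCoeff_C, constantCoeff_C, sub_eq_zero] at h3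
    exact h3
  · intro x
    obtain ⟨f, hf⟩ := Submodule.Quotient.mk_surjective (Ideal.span {(X : PowerSeries O)})
      (RestrictScalars.addEquiv O (PowerSeries O) _ x)
    refine ⟨constantCoeff f, ?_⟩
    apply (RestrictScalars.addEquiv O (PowerSeries O) _).injective
    show (Submodule.Quotient.mk (C (constantCoeff f)) :
        PowerSeries O ⧸ (Ideal.span {(X : PowerSeries O)})) = _
    rw [← hf, Submodule.Quotient.eq]
    exact (Ideal.mem_span_singleton).mpr (X_dvd_iff.mpr (by simp))

theorem exTorsionProd :
    Submodule.torsion (PowerSeries O)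
        (PowerSeries O × (PowerSeries O ⧸ (Ideal.span {(X : PowerSeries O)})))
      = Submodule.prod (⊥ : Submodule (PowerSeries O) (PowerSeries O))
          (⊤ : Submodule (PowerSeries O)
            (PowerSeries O ⧸ (Ideal.span {(X : PowerSeries O)}))) := by
  ext ⟨a, b⟩
  rw [Submodule.mem_torsion_iff, Submodule.mem_prod]
  constructor
  · rintro ⟨r, hr⟩
    rw [Submonoid.smul_def, Prod.smul_mk, Prod.mk_eq_zero] at hr
    refine ⟨?_, trivial⟩
    have hrne : (r : PowerSeries O) ≠ 0 := mem_nonZeroDivisors_iff_ne_zero.mp r.2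
    have := hr.1
    rw [smul_eq_mul] at this
    rcases mul_eq_zero.mp this with h | h
    · exact absurd h hrne
    · simpa using h
  · rintro ⟨ha, -⟩
    have ha0 : a = 0 := by simpa using ha
    refine ⟨⟨X, mem_nonZeroDivisors_iff_ne_zero.mpr X_ne_zero⟩, ?_⟩
    rw [Submonoid.smul_def, Prod.smul_mk, Prod.mk_eq_zero]
    constructor
    · rw [ha0, smul_zero]
    · obtain ⟨f, rfl⟩ := Submodule.Quotient.mk_surjective _ b
      rw [← Submodule.Quotient.mk_smul, Submodule.Quotient.mk_eq_zero]
      rw [smul_eq_mul]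
      exact (Ideal.mem_span_singleton).mpr (dvd_mul_right _ _)

end Tor


section Main

variable {O : Type*} [CommRing O] [IsDomain O] [IsDiscreteValuationRing O]

-- the quotient (Λ × Λ/(X)) / ϖ(Λ × Λ/(X)) computed explicitly
noncomputable def exChainA (ϖ : O) :
    ((PowerSeries O × (PowerSeries O ⧸ Ideal.span {(X : PowerSeries O)}))
        ⧸ (Ideal.span {C ϖ} • ⊤ : Submodule (PowerSeries O)
            (PowerSeries O × (PowerSeries O ⧸ Ideal.span {(X : PowerSeries O)}))))
      ≃ₗ[PowerSeries O]
      ((PowerSeries O ⧸ (Ideal.span {C ϖ} : Ideal (PowerSeries O)))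
        × (PowerSeries O ⧸ (Ideal.span {C ϖ, X} : Ideal (PowerSeries O)))) := by
  set g : (PowerSeries O × PowerSeries O) →ₗ[PowerSeries O]
      (PowerSeries O × (PowerSeries O ⧸ Ideal.span {(X : PowerSeries O)})) :=
    LinearMap.prodMap LinearMap.id (Ideal.span {(X : PowerSeries O)}).mkQ with hgdef
  have hgsurj : Function.Surjective g := by
    rintro ⟨y1, y2⟩
    obtain ⟨f, hf⟩ := Submodule.Quotient.mk_surjective _ y2
    exact ⟨(y1, f), Prod.ext rfl hf⟩
  have hgker : LinearMap.ker g = Submodule.prod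
      (⊥ : Submodule (PowerSeries O) (PowerSeries O))
      (Ideal.span {(X : PowerSeries O)} : Ideal (PowerSeries O)) := by
    rw [hgdef, LinearMap.ker_prodMap, LinearMap.ker_id, Submodule.ker_mkQ]
  exact ((exQuotSmulTopEquivOfSurjective (Ideal.span {C ϖ}) g hgsurj).symm).trans
    ((Submodule.quotEquivOfEq
        (LinearMap.ker g ⊔ (Ideal.span {C ϖ} • ⊤))
        (Submodule.prod (Ideal.span {C ϖ} : Ideal (PowerSeries O))
          (Ideal.span {C ϖ, X}))
        (by rw [hgker]; exact exKA ϖ)).trans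
      (exQuotProdEquiv _ _))

-- the quotient B/ϖB for B the maximal ideal, computed explicitly
noncomputable def exChainB {ϖ : O} (hϖ : Irreducible ϖ) :
    (((IsLocalRing.maximalIdeal (PowerSeries O) : Submodule (PowerSeries O) (PowerSeries O)))
        ⧸ (Ideal.span {C ϖ} • ⊤ : Submodule (PowerSeries O)
            (IsLocalRing.maximalIdeal (PowerSeries O) :
              Submodule (PowerSeries O) (PowerSeries O))))
      ≃ₗ[PowerSeries O]
      ((PowerSeries O ⧸ (Ideal.span {C ϖ, X} : Ideal (PowerSeries O)))
        × (PowerSeries O ⧸ (Ideal.span {C ϖ} : Ideal (PowerSeries O)))) := by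
  have hmax := exMaxIdeal (O := O) hϖ
  have hmax' : (IsLocalRing.maximalIdeal (PowerSeries O) :
      Submodule (PowerSeries O) (PowerSeries O)) = LinearMap.range (exPsi ϖ) := by
    rw [exPsi_range, hmax]
  set ψ' : (PowerSeries O × PowerSeries O) →ₗ[PowerSeries O]
      (IsLocalRing.maximalIdeal (PowerSeries O) : Submodule (PowerSeries O) (PowerSeries O)) :=
    LinearMap.codRestrict _ (exPsi ϖ) (fun x => by
      rw [hmax']; exact LinearMap.mem_range_self _ x) with hψ'def
  have hψ'surj : Function.Surjective ψ' := by
    intro y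
    have hy : (y : PowerSeries O) ∈ LinearMap.range (exPsi ϖ) := by rw [← hmax']; exact y.2
    obtain ⟨x, hx⟩ := hy
    exact ⟨x, Subtype.ext hx⟩
  have hψ'ker : LinearMap.ker ψ' = Submodule.span (PowerSeries O)
      {((X : PowerSeries O), -(C ϖ))} := by
    rw [hψ'def, LinearMap.ker_codRestrict, exPsi_ker hϖ]
  exact ((exQuotSmulTopEquivOfSurjective (Ideal.span {C ϖ}) ψ' hψ'surj).symm).trans
    ((Submodule.quotEquivOfEq
        (LinearMap.ker ψ' ⊔ (Ideal.span {C ϖ} • ⊤))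
        (Submodule.prod (Ideal.span {C ϖ, X} : Ideal (PowerSeries O))
          (Ideal.span {C ϖ}))
        (by rw [hψ'ker]; exact exKB ϖ)).trans
      (exQuotProdEquiv _ _))

theorem exRankProd :
    Module.rank (PowerSeries O)
      (PowerSeries O × (PowerSeries O ⧸ Ideal.span {(X : PowerSeries O)})) = 1 := by
  rw [← rank_quotient_eq_of_le_torsion (le_of_eq exTorsionProd.symm)]
  have e := (Submodule.quotEquivOfEq _ _
      (by ext x; simp [LinearMap.mem_ker] :
        Submodule.prod (⊥ : Submodule (PowerSeries O) (PowerSeries O))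
          (⊤ : Submodule (PowerSeries O)
            (PowerSeries O ⧸ Ideal.span {(X : PowerSeries O)}))
        = LinearMap.ker (LinearMap.fst (PowerSeries O) (PowerSeries O)
            (PowerSeries O ⧸ Ideal.span {(X : PowerSeries O)})))).trans
    ((LinearMap.fst (PowerSeries O) (PowerSeries O)
        (PowerSeries O ⧸ Ideal.span {(X : PowerSeries O)})).quotKerEquivOfSurjective
      LinearMap.fst_surjective)
  rw [e.rank_eq, Module.rank_self]

theorem exNZSD : NoZeroSMulDivisors (PowerSeries O) (PowerSeries O) :=
  ⟨fun h => mul_eq_zero.mp h⟩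

theorem exRankMax {ϖ : O} (hϖ : Irreducible ϖ) :
    Module.rank (PowerSeries O)
      (IsLocalRing.maximalIdeal (PowerSeries O) :
        Submodule (PowerSeries O) (PowerSeries O)) = 1 := by
  have hCϖ0 : (C ϖ) ≠ 0 := fun h => hϖ.ne_zero (by simpa using congrArg (constantCoeff (R := O)) h)
  rw [exMaxIdeal hϖ]
  refine le_antisymm (le_trans (Submodule.rank_le _) (le_of_eq (Module.rank_self _))) ?_
  have hnt : Nontrivial (Ideal.span {C ϖ, X} :
      Submodule (PowerSeries O) (PowerSeries O)) := by
    refine nontrivial_of_ne ⟨C ϖ, Ideal.subset_span (by simp)⟩ 0 ?_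
    intro h
    exact hCϖ0 (congrArg Subtype.val h)
  haveI := exNZSD (O := O)
  haveI : NoZeroSMulDivisors (PowerSeries O)
      (Ideal.span {C ϖ, X} : Submodule (PowerSeries O) (PowerSeries O)) :=
    ⟨fun {c x} h => by
      have h' : c * (x : PowerSeries O) = 0 := congrArg Subtype.val h
      exact (mul_eq_zero.mp h').imp_right Subtype.ext⟩
  exact Cardinal.one_le_iff_pos.mpr rank_pos

theorem exTorsionMax {B : Type*} [AddCommGroup B] [Module (PowerSeries O) B]
    (eB : B ≃ₗ[PowerSeries O] (IsLocalRing.maximalIdeal (PowerSeries O) :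
      Submodule (PowerSeries O) (PowerSeries O))) :
    Submodule.torsion (PowerSeries O) B = ⊥ := by
  rw [Submodule.eq_bot_iff]
  rintro x ⟨r, hr⟩
  rw [Submonoid.smul_def] at hr
  have h1 : (r : PowerSeries O) • eB x = 0 := by rw [← map_smul, hr, map_zero]
  have h2 : (r : PowerSeries O) * ((eB x : _) : PowerSeries O) = 0 :=
    congrArg Subtype.val h1
  have hrne : (r : PowerSeries O) ≠ 0 := mem_nonZeroDivisors_iff_ne_zero.mp r.2
  have h3 : ((eB x : _) : PowerSeries O) = 0 := (mul_eq_zero.mp h2).resolve_left hrne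
  exact eB.map_eq_zero_iff.mp (Subtype.ext h3)

theorem exInfiniteO {ϖ : O} (hϖ : Irreducible ϖ) : Infinite O := by
  by_contra hfin
  rw [not_infinite_iff_finite] at hfin
  obtain ⟨c, hc⟩ := (Finite.isField_of_domain O).mul_inv_cancel hϖ.ne_zero
  exact hϖ.not_isUnit (IsUnit.of_mul_eq_one _ hc)

theorem exNoFiniteA {ϖ : O} (hϖ : Irreducible ϖ) {A : Type*} [AddCommGroup A]
    [Module (PowerSeries O) A]
    (eA : A ≃ₗ[PowerSeries O]
      (PowerSeries O × (PowerSeries O ⧸ Ideal.span {(X : PowerSeries O)}))) :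
    ∀ N : Submodule (PowerSeries O) A, Finite N → N = ⊥ := by
  haveI : Infinite O := exInfiniteO hϖ
  intro N hN
  rw [Submodule.eq_bot_iff]
  intro x hx
  by_contra hx0
  haveI := hN
  have hinj : Function.Injective
      (fun a : O => (⟨(C a) • x, N.smul_mem _ hx⟩ : N)) := by
    intro a b hab
    have h1 : (C a) • x = (C b) • x := congrArg Subtype.val hab
    have h2 : (C (a - b)) • x = 0 := by
      rw [map_sub, sub_smul, h1, sub_self]
    by_contra hne
    have hab2 : a - b ≠ 0 := sub_ne_zero.mpr (fun h => hne (by rw [h]))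
    have h3 : (C (a - b)) • eA x = 0 := by rw [← map_smul, h2, map_zero]
    have h4 : eA x = 0 := by
      have h5 : (C (a - b)) • (eA x).1 = 0 := congrArg Prod.fst h3
      have h6 : (C (a - b)) • (eA x).2 = 0 := congrArg Prod.snd h3
      have hCne : C (a - b) ≠ 0 :=
        fun h => hab2 (by simpa using congrArg (constantCoeff (R := O)) h)
      have hf : (eA x).1 = 0 := by
        rw [smul_eq_mul] at h5
        exact (mul_eq_zero.mp h5).resolve_left hCne
      have hp : (eA x).2 = 0 := by
        obtain ⟨f, hfeq⟩ := Submodule.Quotient.mk_surjective _ (eA x).2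
        rw [← hfeq, ← Submodule.Quotient.mk_smul, Submodule.Quotient.mk_eq_zero] at h6
        have hdvd : (X : PowerSeries O) ∣ C (a - b) * f := by
          rw [← smul_eq_mul]
          exact Ideal.mem_span_singleton.mp h6
        rcases X_prime.2.2 _ _ hdvd with h | h
        · exact absurd (by simpa using X_dvd_iff.mp h) hab2
        · rw [← hfeq, Submodule.Quotient.mk_eq_zero]
          exact Ideal.mem_span_singleton.mpr h
      exact Prod.ext hf hp
    exact hx0 (eA.map_eq_zero_iff.mp h4)
  exact absurd (Finite.of_injective _ hinj) (not_finite_iff_infinite.mpr inferInstance)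

theorem exNoFiniteB {ϖ : O} (hϖ : Irreducible ϖ) {B : Type*} [AddCommGroup B]
    [Module (PowerSeries O) B]
    (eB : B ≃ₗ[PowerSeries O] (IsLocalRing.maximalIdeal (PowerSeries O) :
      Submodule (PowerSeries O) (PowerSeries O))) :
    ∀ N : Submodule (PowerSeries O) B, Finite N → N = ⊥ := by
  haveI : Infinite O := exInfiniteO hϖ
  haveI : Infinite (PowerSeries O) := Infinite.of_injective (C (R := O)) C_injective
  intro N hN
  rw [Submodule.eq_bot_iff]
  intro x hx
  by_contra hx0
  haveI := hN
  have hinj : Function.Injective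
      (fun a : PowerSeries O => (⟨a • x, N.smul_mem _ hx⟩ : N)) := by
    intro a b hab
    have h1 : a • x = b • x := congrArg Subtype.val hab
    have h2 : (a - b) • x = 0 := by rw [sub_smul, h1, sub_self]
    have h3 : (a - b) • eB x = 0 := by rw [← map_smul, h2, map_zero]
    have h4 : (a - b) * ((eB x : _) : PowerSeries O) = 0 := congrArg Subtype.val h3
    have h5 : ((eB x : _) : PowerSeries O) ≠ 0 := by
      intro h
      exact hx0 (eB.map_eq_zero_iff.mp (Subtype.ext h))
    have h6 : a - b = 0 := (mul_eq_zero.mp h4).resolve_right h5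
    exact sub_eq_zero.mp h6
  exact absurd (Finite.of_injective _ hinj) (not_finite_iff_infinite.mpr inferInstance)

noncomputable def exLambdaA {A : Type*} [AddCommGroup A] [Module (PowerSeries O) A]
    (eA : A ≃ₗ[PowerSeries O]
      (PowerSeries O × (PowerSeries O ⧸ Ideal.span {(X : PowerSeries O)}))) :
    RestrictScalars O (PowerSeries O) (Submodule.torsion (PowerSeries O) A) ≃ₗ[O] O :=
  ((exRestrictEquiv O ((exTorsionEquiv eA).trans
    ((LinearEquiv.ofEq _ _ exTorsionProd).trans exBotProdTopEquiv))).trans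
    exPEquiv.symm)

end Main


/-- Example 3.4 of the paper: Let Λ = O[[X]], B the maximal ideal
of Λ, and A = Λ ⊕ O (realized as Λ × Λ/(X)).  Then A/ϖA ≅ B/ϖB as
Ω = Λ/(ϖ)-modules, both have Λ-rank 1, μ(A) = μ(B) = 0, neither has a nonzero
finite Λ-submodule, yet λ(A) = 1 ≠ 0 = λ(B). -/
theorem example_lambda_differs
    (O : Type*) [CommRing O] [IsDomain O] [IsDiscreteValuationRing O]
    [IsAdicComplete (IsLocalRing.maximalIdeal O) O]
    [Finite (IsLocalRing.ResidueField O)]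
    (ϖ : O) (hϖ : Irreducible ϖ)
    (I : Ideal (PowerSeries O)) (hI : I = Ideal.span {C ϖ})
    (A : Type*) [AddCommGroup A] [Module (PowerSeries O) A]
    (hA : Nonempty (A ≃ₗ[PowerSeries O]
      (PowerSeries O × (PowerSeries O ⧸ Ideal.span {(X : PowerSeries O)}))))
    (B : Type*) [AddCommGroup B] [Module (PowerSeries O) B]
    (hB : Nonempty (B ≃ₗ[PowerSeries O]
      (IsLocalRing.maximalIdeal (PowerSeries O) : Submodule (PowerSeries O)
        (PowerSeries O)))) :
    -- A/ϖA ≅ B/ϖB as Ω-modules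
    Nonempty ((A ⧸ (I • ⊤ : Submodule (PowerSeries O) A)) ≃ₗ[PowerSeries O]
      (B ⧸ (I • ⊤ : Submodule (PowerSeries O) B))) ∧
    -- both have Λ-rank one
    Module.rank (PowerSeries O) A = 1 ∧ Module.rank (PowerSeries O) B = 1 ∧
    -- μ(A) = μ(B) = 0
    Module.Finite O
      (RestrictScalars O (PowerSeries O) (Submodule.torsion (PowerSeries O) A)) ∧
    Module.Finite O
      (RestrictScalars O (PowerSeries O) (Submodule.torsion (PowerSeries O) B)) ∧
    -- no nonzero finite Λ-submodules
    (∀ N : Submodule (PowerSeries O) A, Finite N → N = ⊥) ∧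
    (∀ N : Submodule (PowerSeries O) B, Finite N → N = ⊥) ∧
    -- λ(A) = 1 but λ(B) = 0
    Module.finrank O
      (RestrictScalars O (PowerSeries O) (Submodule.torsion (PowerSeries O) A)) = 1 ∧
    Module.finrank O
      (RestrictScalars O (PowerSeries O) (Submodule.torsion (PowerSeries O) B)) = 0 := by
  subst hI
  obtain ⟨eA⟩ := hA
  obtain ⟨eB⟩ := hB
  refine ⟨?_, ?_, ?_, ?_, ?_, ?_, ?_, ?_, ?_⟩
  · exact ⟨((exQuotSmulTopEquiv (Ideal.span {C ϖ}) eA).trans (exChainA ϖ)).trans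
      ((LinearEquiv.prodComm _ _ _).trans
        ((exQuotSmulTopEquiv (Ideal.span {C ϖ}) eB).trans (exChainB hϖ)).symm)⟩
  · -- rank A = 1
    have h1 := eA.lift_rank_eq
    rw [exRankProd, Cardinal.lift_one] at h1
    exact Cardinal.lift_eq_one.mp h1
  · -- rank B = 1
    have h1 := eB.lift_rank_eq
    rw [exRankMax hϖ, Cardinal.lift_one] at h1
    exact Cardinal.lift_eq_one.mp h1
  · -- μ(A) = 0
    exact Module.Finite.equiv (exLambdaA eA).symm
  · -- μ(B) = 0
    haveI hsub : Subsingleton (Submodule.torsion (PowerSeries O) B) := by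
      rw [exTorsionMax eB]; infer_instance
    haveI : Subsingleton
        (RestrictScalars O (PowerSeries O) (Submodule.torsion (PowerSeries O) B)) := hsub
    infer_instance
  · exact exNoFiniteA hϖ eA
  · exact exNoFiniteB hϖ eB
  · -- λ(A) = 1
    rw [(exLambdaA eA).finrank_eq, Module.finrank_self]
  · -- λ(B) = 0
    haveI hsub : Subsingleton (Submodule.torsion (PowerSeries O) B) := by
      rw [exTorsionMax eB]; infer_instance
    haveI : Subsingleton
        (RestrictScalars O (PowerSeries O) (Submodule.torsion (PowerSeries O) B)) := hsub
    exact Module.finrank_zero_of_subsingleton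
end
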